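/- Existence and uniqueness of the Zelevinsky permutation: given any (2n+1)×(2n+1) block structure with prescribed block row heights and column widths and a block rank matrix b coming from a quiver rank array, there is a unique permutation matrix v such that (1) the number of 1s in block (i,j) equals b_{i,j} + b_{i-1,j-1} - b_{i,j-1} - b_{i-1,j} (with b_{i,j} = 0 when i or j is out of range), (2) within each block row the 1s proceed from northwest to southeast, and (3) within each block column the 1s proceed from northwest to southeast. -/

import Mathlib

/-- Cumulative block sizes: `cum f k` is the first row/column index of block `k`
(0-indexed blocks, so block `k` occupies indices `cum f k ≤ r < cum f (k+1)`). -/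
def cum (f : ℕ → ℕ) (k : ℕ) : ℕ := ∑ i ∈ Finset.range k, f i

lemma cum_mono (f : ℕ → ℕ) : Monotone (cum f) := fun _ _ hab =>
  Finset.sum_le_sum_of_subset (Finset.range_subset_range.mpr hab)

lemma cum_succ (f : ℕ → ℕ) (k : ℕ) : cum f (k+1) = cum f k + f k :=
  Finset.sum_range_succ f k

lemma cum_zero (f : ℕ → ℕ) : cum f 0 = 0 := rfl

noncomputable def cumblk (f : ℕ → ℕ) (x : ℕ) : ℕ := sInf {k | x < cum f (k+1)}

lemma cumblk_lt {f : ℕ → ℕ} {M x : ℕ} (hx : x < cum f M) : x < cum f (cumblk f x + 1) :=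
  Nat.sInf_mem (s := {k | x < cum f (k+1)})
    ⟨M, show x < cum f (M+1) from lt_of_lt_of_le hx (cum_mono f (Nat.le_succ M))⟩

lemma cumblk_le (f : ℕ → ℕ) (x : ℕ) : cum f (cumblk f x) ≤ x := by
  rcases Nat.eq_zero_or_pos (cumblk f x) with h | h
  · simp [h, cum_zero]
  · have hlt : cumblk f x - 1 < cumblk f x := Nat.sub_lt h Nat.one_pos
    have h2 : cumblk f x - 1 ∉ {k | x < cum f (k+1)} := Nat.notMem_of_lt_sInf hlt
    simp only [Set.mem_setOf_eq, not_lt] at h2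
    calc cum f (cumblk f x) = cum f (cumblk f x - 1 + 1) := by congr 1; omega
    _ ≤ x := h2

lemma cumblk_eq {f : ℕ → ℕ} {x k : ℕ} (h1 : cum f k ≤ x) (h2 : x < cum f (k+1)) :
    cumblk f x = k := by
  have hle : cumblk f x ≤ k := Nat.sInf_le h2
  have hmem : x < cum f (cumblk f x + 1) := cumblk_lt (lt_of_lt_of_le h2 (le_refl _))
  by_contra hne
  have h3 : cumblk f x + 1 ≤ k := by omega
  exact absurd (le_trans (cum_mono f h3) h1) (not_le.mpr hmem)

lemma cumblk_lt_top {f : ℕ → ℕ} {M x : ℕ} (hx : x < cum f M) : cumblk f x < M := by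
  by_contra hc
  exact absurd (le_trans (cum_mono f (not_lt.mp hc)) (cumblk_le f x)) (not_le.mpr hx)

lemma cumblk_mono {f : ℕ → ℕ} {M x y : ℕ} (hxy : x ≤ y) (hy : y < cum f M) :
    cumblk f x ≤ cumblk f y := by
  by_contra hc
  have h1 : y < cum f (cumblk f y + 1) := cumblk_lt hy
  have h2 : cum f (cumblk f y + 1) ≤ cum f (cumblk f x) := cum_mono f (by omega)
  have h3 := cumblk_le f x
  omega

lemma card_finInterval (d a c : ℕ) (hc : c ≤ d) :
    (Finset.univ.filter (fun r : Fin d => a ≤ r.val ∧ r.val < c)).card = c - a := by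
  rw [← Nat.card_Ico a c]
  apply Finset.card_bij (fun r _ => r.val)
  · intro r hr
    simp only [Finset.mem_filter, Finset.mem_univ, true_and] at hr
    simp [Finset.mem_Ico, hr.1, hr.2]
  · intro r _ r' _ hrr
    exact Fin.val_injective hrr
  · intro x hx
    simp only [Finset.mem_Ico] at hx
    exact ⟨⟨x, lt_of_lt_of_le hx.2 hc⟩, by simp [hx.1, hx.2], rfl⟩

lemma downset_eq {d : ℕ} (a L : ℕ) (T : Finset (Fin d))
    (hsub : ∀ x ∈ T, a ≤ x.val ∧ x.val < a + L)
    (hdc : ∀ x ∈ T, ∀ y : Fin d, a ≤ y.val → y ≤ x → y ∈ T) :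
    ∀ x : Fin d, x ∈ T ↔ a ≤ x.val ∧ x.val < a + T.card := by
  intro x
  constructor
  · intro hx
    refine ⟨(hsub x hx).1, ?_⟩
    have h1 : (Finset.univ.filter (fun y : Fin d => a ≤ y.val ∧ y.val < x.val + 1)) ⊆ T := by
      intro y hy
      simp only [Finset.mem_filter, Finset.mem_univ, true_and] at hy
      exact hdc x hx y hy.1 (Fin.le_def.mpr (by omega))
    have h2 := Finset.card_le_card h1
    rw [card_finInterval d a (x.val+1) x.isLt] at h2
    have h3 := (hsub x hx).1
    omega
  · rintro ⟨hax, hx⟩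
    by_contra hxT
    have h1 : T ⊆ Finset.univ.filter (fun y : Fin d => a ≤ y.val ∧ y.val < x.val) := by
      intro y hy
      simp only [Finset.mem_filter, Finset.mem_univ, true_and]
      refine ⟨(hsub y hy).1, ?_⟩
      by_contra hc
      exact hxT (hdc y hy x hax (Fin.le_def.mpr (by omega)))
    have h2 := Finset.card_le_card h1
    rw [card_finInterval d a x.val x.isLt.le] at h2
    omega

/-- existence and uniqueness of the Zelevinsky permutation: given a
`(2n+1) × (2n+1)` block structure (here with `m = 2n+1` blocks of row heights
`h 0, …, h (m-1)` and column widths `w 0, …, w (m-1)`) and a block rank matrix `b`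
coming from a quiver rank array — i.e. `b` records the ranks of the northwest block
submatrices, so the boundary values vanish, the values `b i m` and `b m j` are the
cumulative heights and widths, and the mixed second differences are nonnegative —
there is a unique permutation of `Fin d` (`d` the total size) such that
(1) the number of `1`s in block `(i,j)` equals `b i j + b (i-1) (j-1) - b i (j-1) - b (i-1) j`,
(2) within each block row the `1`s proceed from northwest to southeast, and
(3) within each block column the `1`s proceed from northwest to southeast. -/
theorem stmt6 (n : ℕ) (h w : ℕ → ℕ) (d : ℕ)
    (hd : d = cum h (2 * n + 1)) (hwid : d = cum w (2 * n + 1))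
    (b : ℕ → ℕ → ℤ)
    (hb0r : ∀ j, b 0 j = 0) (hb0c : ∀ i, b i 0 = 0)
    (hrow : ∀ i, 1 ≤ i → i ≤ 2 * n + 1 → b i (2 * n + 1) = (cum h i : ℤ))
    (hcol : ∀ j, 1 ≤ j → j ≤ 2 * n + 1 → b (2 * n + 1) j = (cum w j : ℤ))
    (hpos : ∀ i j, 1 ≤ i → i ≤ 2 * n + 1 → 1 ≤ j → j ≤ 2 * n + 1 →
      0 ≤ b i j + b (i - 1) (j - 1) - b i (j - 1) - b (i - 1) j) :
    ∃! σ : Equiv.Perm (Fin d),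
      (∀ i j, 1 ≤ i → i ≤ 2 * n + 1 → 1 ≤ j → j ≤ 2 * n + 1 →
        ((Finset.univ.filter (fun r : Fin d =>
            cum h (i - 1) ≤ r.val ∧ r.val < cum h i ∧
            cum w (j - 1) ≤ (σ r).val ∧ (σ r).val < cum w j)).card : ℤ)
          = b i j + b (i - 1) (j - 1) - b i (j - 1) - b (i - 1) j)
      ∧ (∀ (i : ℕ) (r r' : Fin d), i < 2 * n + 1 →
            cum h i ≤ r.val → r'.val < cum h (i + 1) → r < r' → σ r < σ r')
      ∧ (∀ (j : ℕ) (c c' : Fin d), j < 2 * n + 1 →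
            cum w j ≤ c.val → c'.val < cum w (j + 1) → c < c' → σ.symm c < σ.symm c') := by
  classical
  set m := 2 * n + 1 with hm
  set N : ℕ → ℕ → ℕ :=
    fun i j => (b i j + b (i-1) (j-1) - b i (j-1) - b (i-1) j).toNat with hNdef
  have hN : ∀ i j, 1 ≤ i → i ≤ m → 1 ≤ j → j ≤ m →
      (N i j : ℤ) = b i j + b (i-1) (j-1) - b i (j-1) - b (i-1) j :=
    fun i j h1 h2 h3 h4 => Int.toNat_of_nonneg (hpos i j h1 h2 h3 h4)
  set Crow : ℕ → ℕ → ℕ := fun i j => cum (fun t => N i (t+1)) j with hCrowdef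
  have hCrow : ∀ i, 1 ≤ i → i ≤ m → ∀ j, j ≤ m → (Crow i j : ℤ) = b i j - b (i-1) j := by
    intro i hi1 hi2 j
    induction j with
    | zero => intro _; simp [hCrowdef, cum_zero, hb0c]
    | succ j ih =>
      intro hj
      have hstep : Crow i (j+1) = Crow i j + N i (j+1) := cum_succ _ j
      rw [hstep, Nat.cast_add, ih (by omega), hN i (j+1) hi1 hi2 (by omega) hj]
      simp only [Nat.add_sub_cancel]
      ring
  have hCrow_top : ∀ i, i < m → Crow (i+1) m = h i := by
    intro i hi
    have h1 : (Crow (i+1) m : ℤ) = b (i+1) m - b i m :=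
      hCrow (i+1) (by omega) (by omega) m (le_refl m)
    have h2 : b (i+1) m = (cum h (i+1) : ℤ) := hrow (i+1) (by omega) (by omega)
    have h3 : b i m = (cum h i : ℤ) := by
      rcases Nat.eq_zero_or_pos i with h0 | h0
      · rw [h0, hb0r m]; simp [cum_zero]
      · exact hrow i h0 (by omega)
    have h4 : (Crow (i+1) m : ℤ) = (h i : ℤ) := by
      rw [h1, h2, h3, cum_succ]; push_cast; ring
    exact_mod_cast h4
  have hDcol : ∀ j, 1 ≤ j → j ≤ m → ∀ i, i ≤ m →
      ((cum (fun t => N (t+1) j) i : ℤ) = b i j - b i (j-1)) := by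
    intro j hj1 hj2 i
    induction i with
    | zero => intro _; simp [cum_zero, hb0r]
    | succ i ih =>
      intro hi
      have hstep : cum (fun t => N (t+1) j) (i+1) = cum (fun t => N (t+1) j) i + N (i+1) j :=
        cum_succ _ i
      rw [hstep, Nat.cast_add, ih (by omega), hN (i+1) j (by omega) hi hj1 hj2]
      simp only [Nat.add_sub_cancel]
      ring
  have hDcol_top : ∀ j, j < m → cum (fun t => N (t+1) (j+1)) m = w j := by
    intro j hj
    have h1 := hDcol (j+1) (by omega) (by omega) m (le_refl m)
    have h2 : b m (j+1) = (cum w (j+1) : ℤ) := hcol (j+1) (by omega) (by omega)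
    have h3 : b m j = (cum w j : ℤ) := by
      rcases Nat.eq_zero_or_pos j with h0 | h0
      · rw [h0, hb0c m]; simp [cum_zero]
      · exact hcol j h0 (by omega)
    have h4 : ((cum (fun t => N (t+1) (j+1)) m : ℤ)) = (w j : ℤ) := by
      rw [h1]; simp only [Nat.add_sub_cancel]
      rw [h2, h3, cum_succ]; push_cast; ring
    exact_mod_cast h4
  have hdh : d = cum h m := hd
  have hdw : d = cum w m := hwid
  -- block data for rows
  set Ib : Fin d → ℕ := fun r => cumblk h r.val with hIbdef
  have hIlt : ∀ r : Fin d, Ib r < m := fun r => cumblk_lt_top (lt_of_lt_of_le r.isLt hdh.le)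
  have hIle : ∀ r : Fin d, cum h (Ib r) ≤ r.val := fun r => cumblk_le h r.val
  have hIlt2 : ∀ r : Fin d, r.val < cum h (Ib r + 1) := fun r => cumblk_lt (lt_of_lt_of_le r.isLt hdh.le)
  set P : Fin d → ℕ := fun r => r.val - cum h (Ib r) with hPdef
  have hPlt : ∀ r : Fin d, P r < Crow (Ib r + 1) m := by
    intro r
    rw [hCrow_top (Ib r) (hIlt r)]
    have h1 := hIle r
    have h2 := hIlt2 r
    rw [cum_succ] at h2
    simp only [hPdef]
    omega
  set J : Fin d → ℕ := fun r => cumblk (fun t => N (Ib r + 1) (t+1)) (P r) with hJdef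
  have hJlt : ∀ r : Fin d, J r < m := fun r => cumblk_lt_top (hPlt r)
  have hJle : ∀ r : Fin d, Crow (Ib r + 1) (J r) ≤ P r := fun r => cumblk_le _ (P r)
  have hJlt2 : ∀ r : Fin d, P r < Crow (Ib r + 1) (J r + 1) := fun r => cumblk_lt (hPlt r)
  -- characterization of block membership
  have hblock : ∀ (r : Fin d) (i j : ℕ), i < m → j < m →
      ((Ib r = i ∧ J r = j) ↔
        (cum h i + Crow (i+1) j ≤ r.val ∧ r.val < cum h i + Crow (i+1) (j+1))) := by
    intro r i j hi hj
    constructor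
    · rintro ⟨hIb, hJ⟩
      have h1 := hIle r
      have h2 := hJle r
      have h3 := hJlt2 r
      simp only [hPdef] at h2 h3
      rw [hIb] at h1 h2 h3
      rw [hJ] at h2 h3
      omega
    · rintro ⟨h1, h2⟩
      have hCle : Crow (i+1) (j+1) ≤ h i := by
        rw [← hCrow_top i hi]; exact cum_mono _ (by omega)
      have hIb : Ib r = i := by
        apply cumblk_eq
        · omega
        · rw [cum_succ]; omega
      refine ⟨hIb, ?_⟩
      have hPr : P r = r.val - cum h i := by simp [hPdef, hIb]
      apply cumblk_eq (f := fun t => N (Ib r + 1) (t+1)) (k := j)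
      · show Crow (Ib r + 1) j ≤ P r
        rw [hIb, hPr]; omega
      · show P r < Crow (Ib r + 1) (j+1)
        rw [hIb, hPr]; omega
  have hJcount : ∀ i j, i < m → j < m →
      (Finset.univ.filter (fun r : Fin d => Ib r = i ∧ J r = j)).card = N (i+1) (j+1) := by
    intro i j hi hj
    have heq : Finset.univ.filter (fun r : Fin d => Ib r = i ∧ J r = j)
        = Finset.univ.filter (fun r : Fin d =>
            cum h i + Crow (i+1) j ≤ r.val ∧ r.val < cum h i + Crow (i+1) (j+1)) := by
      apply Finset.filter_congr
      intro r _
      exact_mod_cast (hblock r i j hi hj)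
    have hCle : Crow (i+1) (j+1) ≤ h i := by
      rw [← hCrow_top i hi]; exact cum_mono _ (by omega)
    have hbd : cum h i + Crow (i+1) (j+1) ≤ d := by
      have : cum h (i+1) ≤ cum h m := cum_mono h (by omega)
      rw [cum_succ] at this
      omega
    rw [heq, card_finInterval d _ _ hbd]
    have hstep : Crow (i+1) (j+1) = Crow (i+1) j + N (i+1) (j+1) := cum_succ _ j
    omega
  have hScard : ∀ j, j < m →
      (Finset.univ.filter (fun r : Fin d => J r = j)).card = w j := by
    intro j hj
    have hsum : (Finset.univ.filter (fun r : Fin d => J r = j)).card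
        = ∑ i ∈ Finset.range m, N (i+1) (j+1) := by
      rw [Finset.card_eq_sum_card_fiberwise (f := fun r : Fin d => Ib r)
        (t := Finset.range m) (fun r _ => Finset.mem_range.mpr (hIlt r))]
      apply Finset.sum_congr rfl
      intro i hi
      rw [Finset.filter_filter, ← hJcount i j (Finset.mem_range.mp hi) hj]
      apply congrArg
      apply Finset.filter_congr
      intro r _
      exact and_comm
    rw [hsum, ← hDcol_top j hj]
    rfl
  set rank : Fin d → ℕ := fun r =>
    ((Finset.univ.filter (fun r' : Fin d => J r' = J r)).filter (fun r' => r' < r)).card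
    with hrankdef
  have hrank_lt : ∀ r : Fin d, rank r < w (J r) := by
    intro r
    rw [← hScard (J r) (hJlt r)]
    apply Finset.card_lt_card
    rw [Finset.ssubset_iff_of_subset (Finset.filter_subset _ _)]
    exact ⟨r, by simp, by simp⟩
  have hrankmono : ∀ r r' : Fin d, J r = J r' → r < r' → rank r < rank r' := by
    intro r r' hJJ hlt
    apply Finset.card_lt_card
    rw [Finset.ssubset_iff_of_subset]
    · refine ⟨r, ?_, ?_⟩
      · simp only [Finset.mem_filter, Finset.mem_univ, true_and]
        exact ⟨hJJ, hlt⟩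
      · simp
    · intro x hx
      simp only [Finset.mem_filter, Finset.mem_univ, true_and] at hx ⊢
      exact ⟨hx.1.trans hJJ, hx.2.trans hlt⟩
  have hσv : ∀ r : Fin d, cum w (J r) + rank r < d := by
    intro r
    have h1 := hrank_lt r
    have h2 : cum w (J r + 1) ≤ cum w m := cum_mono w (hJlt r)
    rw [cum_succ] at h2
    omega
  set σf : Fin d → Fin d := fun r => ⟨cum w (J r) + rank r, hσv r⟩ with hσfdef
  have hσfval : ∀ r : Fin d, (σf r).val = cum w (J r) + rank r := fun r => rfl
  have hσflt : ∀ r : Fin d, (σf r).val < cum w (J r + 1) := by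
    intro r
    rw [hσfval, cum_succ]
    exact Nat.add_lt_add_left (hrank_lt r) _
  have hvb : ∀ r : Fin d, cumblk w (σf r).val = J r := by
    intro r
    exact cumblk_eq (by rw [hσfval]; exact Nat.le_add_right _ _) (hσflt r)
  have hinj : Function.Injective σf := by
    intro r r' heq
    have hv : cum w (J r) + rank r = cum w (J r') + rank r' := by
      rw [← hσfval r, ← hσfval r', heq]
    have hJJ : J r = J r' := by rw [← hvb r, ← hvb r', heq]
    rcases lt_trichotomy r r' with hc | hc | hc
    · exact absurd (hrankmono r r' hJJ hc) (by rw [hJJ] at hv; omega)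
    · exact hc
    · exact absurd (hrankmono r' r hJJ.symm hc) (by rw [hJJ] at hv; omega)
  set σ : Equiv.Perm (Fin d) := Equiv.ofBijective σf (Finite.injective_iff_bijective.mp hinj)
    with hσdef
  have hσ : ∀ r, σ r = σf r := fun r => rfl
  have hJmono : ∀ r r' : Fin d, Ib r = Ib r' → r < r' → J r ≤ J r' := by
    intro r r' hI hlt
    by_contra hc
    push_neg at hc
    have hmono : Crow (Ib r + 1) (J r' + 1) ≤ Crow (Ib r + 1) (J r) := cum_mono _ (by omega)
    have h1 := hJlt2 r'
    rw [← hI] at h1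
    have h2 := hJle r
    have hP : P r < P r' := by
      have k1 := hIle r
      have k2 : r.val < r'.val := Fin.lt_def.mp hlt
      simp only [hPdef]
      rw [← hI]
      omega
    omega
  have hP1 : ∀ i j, 1 ≤ i → i ≤ m → 1 ≤ j → j ≤ m →
      ((Finset.univ.filter (fun r : Fin d =>
          cum h (i - 1) ≤ r.val ∧ r.val < cum h i ∧
          cum w (j - 1) ≤ (σ r).val ∧ (σ r).val < cum w j)).card : ℤ)
        = b i j + b (i-1) (j-1) - b i (j-1) - b (i-1) j := by
    intro i j hi1 hi2 hj1 hj2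
    have hiff : ∀ r : Fin d,
        (cum h (i - 1) ≤ r.val ∧ r.val < cum h i ∧
          cum w (j - 1) ≤ (σ r).val ∧ (σ r).val < cum w j) ↔ (Ib r = i - 1 ∧ J r = j - 1) := by
      intro r
      rw [hσ r]
      constructor
      · rintro ⟨h1, h2, h3, h4⟩
        have hIb : Ib r = i - 1 :=
          cumblk_eq h1 (by rw [show i - 1 + 1 = i by omega]; exact h2)
        have hJb : cumblk w (σf r).val = j - 1 :=
          cumblk_eq h3 (by rw [show j - 1 + 1 = j by omega]; exact h4)
        rw [hvb r] at hJb
        exact ⟨hIb, hJb⟩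
      · rintro ⟨h1, h2⟩
        refine ⟨?_, ?_, ?_, ?_⟩
        · rw [← h1]; exact hIle r
        · have := hIlt2 r
          rw [h1, show i - 1 + 1 = i by omega] at this
          exact this
        · rw [← h2, ← hvb r]; exact cumblk_le w _
        · have := hσflt r
          rw [h2, show j - 1 + 1 = j by omega] at this
          exact this
    rw [Finset.filter_congr (fun r _ => hiff r),
      hJcount (i-1) (j-1) (by omega) (by omega),
      show i - 1 + 1 = i by omega, show j - 1 + 1 = j by omega]
    exact hN i j hi1 hi2 hj1 hj2
  have hP2 : ∀ (i : ℕ) (r r' : Fin d), i < m →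
      cum h i ≤ r.val → r'.val < cum h (i + 1) → r < r' → σ r < σ r' := by
    intro i r r' hi hr hr' hlt
    have hvv : r.val < r'.val := Fin.lt_def.mp hlt
    have hIr : Ib r = i := cumblk_eq hr (by omega)
    have hIr' : Ib r' = i := cumblk_eq (by omega) hr'
    have hJJ : J r ≤ J r' := hJmono r r' (hIr.trans hIr'.symm) hlt
    rcases eq_or_lt_of_le hJJ with heq | hlt2
    · have hrk : rank r < rank r' := hrankmono r r' heq hlt
      rw [hσ r, hσ r', Fin.lt_def, hσfval, hσfval, ← heq]
      omega
    · rw [hσ r, hσ r', Fin.lt_def]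
      have k1 := hσflt r
      have k2 : cum w (J r + 1) ≤ cum w (J r') := cum_mono w hlt2
      have k3 : cum w (J r') ≤ (σf r').val := by
        rw [hσfval]; exact Nat.le_add_right _ _
      omega
  have hP3 : ∀ (j : ℕ) (c c' : Fin d), j < m →
      cum w j ≤ c.val → c'.val < cum w (j + 1) → c < c' → σ.symm c < σ.symm c' := by
    intro j c c' hj hc hc' hlt
    have hvv : c.val < c'.val := Fin.lt_def.mp hlt
    set r := σ.symm c with hr
    set r' := σ.symm c' with hr'
    have e1 : σf r = c := by rw [← hσ r, hr]; exact Equiv.apply_symm_apply σ c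
    have e2 : σf r' = c' := by rw [← hσ r', hr']; exact Equiv.apply_symm_apply σ c'
    have hJr : J r = j := by
      rw [← hvb r, e1]; exact cumblk_eq hc (by omega)
    have hJr' : J r' = j := by
      rw [← hvb r', e2]; exact cumblk_eq (by omega) hc'
    have hrk : rank r < rank r' := by
      have k1 : c.val = cum w j + rank r := by rw [← e1, hσfval, hJr]
      have k2 : c'.val = cum w j + rank r' := by rw [← e2, hσfval, hJr']
      omega
    rcases lt_trichotomy r r' with hcase | hcase | hcase
    · exact hcase
    · exfalso
      have : c.val = c'.val := by rw [← e1, ← e2, hcase]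
      omega
    · exact absurd (hrankmono r' r (hJr'.trans hJr.symm) hcase) (by omega)
  refine ⟨σ, ⟨hP1, hP2, hP3⟩, ?_⟩
  rintro τ ⟨H1, H2, H3⟩
  have hτd : ∀ x : Fin d, (τ x).val < cum w m := fun x => lt_of_lt_of_le (τ x).isLt hdw.le
  have hA : ∀ x : Fin d, cumblk w (τ x).val = J x := by
    intro x
    set i := Ib x with hidef
    have hi : i < m := hIlt x
    have hT2 : ∀ j, j < m → ∀ y : Fin d, (Ib y = i ∧ J y ≤ j) ↔
        (cum h i ≤ y.val ∧ y.val < cum h i + Crow (i+1) (j+1)) := by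
      intro j hj y
      constructor
      · rintro ⟨h1, h2⟩
        have k1 := hIle y
        have k2 := hJlt2 y
        simp only [hPdef] at k2
        rw [h1] at k1 k2
        have k3 : Crow (i + 1) (J y + 1) ≤ Crow (i + 1) (j + 1) := cum_mono _ (by omega)
        exact ⟨k1, by omega⟩
      · rintro ⟨h1, h2⟩
        have hCle : Crow (i+1) (j+1) ≤ h i := by
          rw [← hCrow_top i hi]; exact cum_mono _ (by omega)
        have hIby : Ib y = i := by
          apply cumblk_eq h1
          rw [cum_succ]; omega
        refine ⟨hIby, ?_⟩
        by_contra hcj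
        push_neg at hcj
        have k2 := hJle y
        simp only [hPdef] at k2
        rw [hIby] at k2
        have k3 : Crow (i + 1) (j + 1) ≤ Crow (i + 1) (J y) := cum_mono _ (by omega)
        omega
    have hT1 : ∀ j, j < m → ∀ y : Fin d,
        (Ib y = i ∧ cumblk w (τ y).val ≤ j) ↔
        (cum h i ≤ y.val ∧ y.val < cum h i + Crow (i+1) (j+1)) := by
      intro j hj
      set T1 : Finset (Fin d) :=
        Finset.univ.filter (fun y : Fin d => Ib y = i ∧ cumblk w (τ y).val ≤ j) with hT1def
      have hcard : T1.card = Crow (i+1) (j+1) := by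
        rw [Finset.card_eq_sum_card_fiberwise (f := fun y : Fin d => cumblk w (τ y).val)
          (t := Finset.range (j+1)) (fun y hy => by
            simp only [hT1def, Finset.mem_coe, Finset.mem_filter, Finset.mem_univ, true_and] at hy
            exact Finset.mem_range.mpr (show cumblk w (τ y).val < j + 1 by omega))]
        have hfib : ∀ j' ∈ Finset.range (j+1),
            (T1.filter (fun y => cumblk w (τ y).val = j')).card = N (i+1) (j'+1) := by
          intro j' hj'
          have hj'm : j' < m := by
            have := Finset.mem_range.mp hj'; omega
          have hset : T1.filter (fun y => cumblk w (τ y).val = j')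
              = Finset.univ.filter (fun y : Fin d =>
                  cum h i ≤ y.val ∧ y.val < cum h (i+1) ∧
                  cum w j' ≤ (τ y).val ∧ (τ y).val < cum w (j'+1)) := by
            rw [hT1def, Finset.filter_filter]
            apply Finset.filter_congr
            intro y _
            constructor
            · rintro ⟨⟨hIy, _⟩, hcy⟩
              refine ⟨by rw [← hIy]; exact hIle y, by rw [← hIy]; exact hIlt2 y, ?_, ?_⟩
              · rw [← hcy]; exact cumblk_le w _
              · rw [← hcy]; exact cumblk_lt (hτd y)
            · rintro ⟨k1, k2, k3, k4⟩
              have hcb : cumblk w (τ y).val = j' := cumblk_eq k3 k4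
              have hib : Ib y = i := cumblk_eq k1 k2
              have := Finset.mem_range.mp hj'
              exact ⟨⟨hib, by omega⟩, hcb⟩
          rw [hset]
          have hH := H1 (i+1) (j'+1) (by omega) (by omega) (by omega) (by omega)
          simp only [Nat.add_sub_cancel] at hH
          have hNe := hN (i+1) (j'+1) (by omega) (by omega) (by omega) (by omega)
          simp only [Nat.add_sub_cancel] at hNe
          exact_mod_cast hH.trans hNe.symm
        rw [Finset.sum_congr rfl hfib]
        rfl
      intro y
      have hds := downset_eq (cum h i) (h i) T1 ?_ ?_ y
      · rw [hcard] at hds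
        simp only [hT1def, Finset.mem_filter, Finset.mem_univ, true_and] at hds
        exact hds
      · intro x' hx'
        simp only [hT1def, Finset.mem_filter, Finset.mem_univ, true_and] at hx'
        have k1 := hIle x'
        have k2 := hIlt2 x'
        rw [hx'.1] at k1 k2
        rw [cum_succ] at k2
        exact ⟨k1, k2⟩
      · intro x' hx' y' hy1 hy2
        simp only [hT1def, Finset.mem_filter, Finset.mem_univ, true_and] at hx' ⊢
        have k2 := hIlt2 x'
        rw [hx'.1] at k2
        have hy'lt : y'.val < cum h (i+1) := lt_of_le_of_lt (Fin.le_def.mp hy2) k2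
        have hIy' : Ib y' = i := cumblk_eq hy1 hy'lt
        refine ⟨hIy', ?_⟩
        rcases eq_or_lt_of_le hy2 with he | hlt'
        · rw [he]; exact hx'.2
        · have hττ : τ y' < τ x' := H2 i y' x' hi hy1 k2 hlt'
          have hmm : cumblk w (τ y').val ≤ cumblk w (τ x').val :=
            cumblk_mono (Fin.lt_def.mp hττ).le (hτd x')
          omega
    have hj1 : cumblk w (τ x).val < m := cumblk_lt_top (hτd x)
    have hj2 : J x < m := hJlt x
    have d1 : J x ≤ cumblk w (τ x).val := by
      have hx1 : Ib x = i ∧ cumblk w (τ x).val ≤ cumblk w (τ x).val := ⟨rfl, le_refl _⟩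
      have hiv := (hT1 _ hj1 x).mp hx1
      exact ((hT2 _ hj1 x).mpr hiv).2
    have d2 : cumblk w (τ x).val ≤ J x := by
      have hx1 : Ib x = i ∧ J x ≤ J x := ⟨rfl, le_refl _⟩
      have hiv := (hT2 _ hj2 x).mp hx1
      exact ((hT1 _ hj2 x).mpr hiv).2
    omega
  apply Equiv.ext
  intro x
  have hjx : J x < m := hJlt x
  have hcb : cumblk w (τ x).val = J x := hA x
  have h1 : cum w (J x) ≤ (τ x).val := by rw [← hcb]; exact cumblk_le w _
  have h2 : (τ x).val < cum w (J x + 1) := by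
    have := cumblk_lt (hτd x)
    rw [hcb] at this; exact this
  have hkey : ∀ y : Fin d, J y = J x → (y < x ↔ τ y < τ x) := by
    intro y hJy
    have hy1 : cum w (J x) ≤ (τ y).val := by
      rw [← hJy, ← hA y]; exact cumblk_le w _
    have hy2 : (τ y).val < cum w (J x + 1) := by
      have := cumblk_lt (hτd y); rw [hA y, hJy] at this; exact this
    constructor
    · intro hlt
      rcases lt_trichotomy (τ y) (τ x) with hc | hc | hc
      · exact hc
      · exact absurd (τ.injective hc) (by intro he; rw [he] at hlt; exact lt_irrefl _ hlt)
      · have hsy := H3 (J x) (τ x) (τ y) hjx h1 hy2 hc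
        rw [Equiv.symm_apply_apply, Equiv.symm_apply_apply] at hsy
        exact absurd hlt (not_lt.mpr hsy.le)
    · intro hlt
      have hsy := H3 (J x) (τ y) (τ x) hjx hy1 h2 hlt
      rw [Equiv.symm_apply_apply, Equiv.symm_apply_apply] at hsy
      exact hsy
  have hcard : rank x = (τ x).val - cum w (J x) := by
    have hbij : ((Finset.univ.filter (fun y : Fin d => J y = J x)).filter (fun y => y < x)).card
        = (Finset.univ.filter (fun c : Fin d =>
            cum w (J x) ≤ c.val ∧ c.val < (τ x).val)).card := by
      apply Finset.card_bij (fun y _ => τ y)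
      · intro y hy
        simp only [Finset.mem_filter, Finset.mem_univ, true_and] at hy ⊢
        refine ⟨by rw [← hy.1, ← hA y]; exact cumblk_le w _, ?_⟩
        exact Fin.lt_def.mp ((hkey y hy.1).mp hy.2)
      · intro y _ y' _ he
        exact τ.injective he
      · intro c hc'
        simp only [Finset.mem_filter, Finset.mem_univ, true_and] at hc'
        have he : τ (τ.symm c) = c := Equiv.apply_symm_apply τ c
        have hJc : J (τ.symm c) = J x := by
          rw [← hA (τ.symm c), he]
          exact cumblk_eq hc'.1 (by omega)
        refine ⟨τ.symm c, ?_, he⟩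
        simp only [Finset.mem_filter, Finset.mem_univ, true_and]
        refine ⟨hJc, ?_⟩
        rw [hkey (τ.symm c) hJc, he]
        exact Fin.lt_def.mpr hc'.2
    have hiv : (Finset.univ.filter (fun c : Fin d =>
          cum w (J x) ≤ c.val ∧ c.val < (τ x).val)).card
        = (τ x).val - cum w (J x) := card_finInterval d _ _ (τ x).isLt.le
    simp only [hrankdef]
    rw [hbij, hiv]
  have hτval : (τ x).val = cum w (J x) + rank x := by omega
  have hfin : (τ x).val = (σ x).val := by rw [hτval, hσ x, hσfval]
  exact Fin.val_injective hfin
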